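/- arXiv:2006.07924 — 2 statements merged into one kernel-verified Lean document; each statement's English description precedes it below -/
import Mathlib

section
/- Knight's identity: for any real numbers a and b and any τ ∈ (0,1), ρ_τ(a−b) − ρ_τ(a) = b·(𝟙{a ≤ 0} − τ) + ∫₀^b (𝟙{a ≤ s} − 𝟙{a ≤ 0}) ds, where ρ_τ(u) = u(τ − 𝟙{u < 0}). -/
noncomputable def rho (τ u : ℝ) : ℝ := u * (τ - if u < 0 then 1 else 0)

lemma indicator_mono (a : ℝ) : Monotone (fun s : ℝ => if a ≤ s then (1:ℝ) else 0) := by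
  intro x y hxy
  by_cases h : a ≤ x
  · simp [h, h.trans hxy]
  · by_cases h' : a ≤ y <;> simp [h, h']

lemma integral_indicator_Ici (a b : ℝ) :
    ∫ s in (0:ℝ)..b, (if a ≤ s then (1:ℝ) else 0) = max b a - max 0 a := by
  have := intervalIntegral.integral_eq_sub_of_hasDeriv_right
    (f := fun x : ℝ => max x a) (f' := fun s : ℝ => if a ≤ s then (1:ℝ) else 0)
    (a := (0:ℝ)) (b := b)
    (by exact (continuous_id.max continuous_const).continuousOn)
    ?_ ((indicator_mono a).intervalIntegrable)
  · exact this
  · intro x _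
    by_cases hx : a ≤ x
    · simp only [hx, if_true]
      have : HasDerivWithinAt (fun y : ℝ => y) (1:ℝ) (Set.Ioi x) x :=
        (hasDerivAt_id x).hasDerivWithinAt
      refine this.congr (fun y hy => ?_) (by simp [max_eq_left hx])
      exact max_eq_left (hx.trans (le_of_lt hy))
    · simp only [hx, if_false]
      push_neg at hx
      have : HasDerivWithinAt (fun _ : ℝ => a) (0:ℝ) (Set.Ioi x) x :=
        (hasDerivWithinAt_const x _ a)
      refine this.congr_of_eventuallyEq ?_ (by simp [max_eq_right hx.le])
      have hmem : Set.Iio a ∈ nhdsWithin x (Set.Ioi x) :=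
        nhdsWithin_le_nhds (Iio_mem_nhds hx)
      filter_upwards [hmem] with y hy
      exact max_eq_right (le_of_lt (Set.mem_Iio.mp hy))

theorem knight_identity (τ : ℝ) (hτ : τ ∈ Set.Ioo (0:ℝ) 1) (a b : ℝ) :
    rho τ (a - b) - rho τ a
      = b * ((if a ≤ 0 then (1:ℝ) else 0) - τ)
        + ∫ s in (0:ℝ)..b, ((if a ≤ s then (1:ℝ) else 0) - (if a ≤ 0 then (1:ℝ) else 0)) := by
  have hint : IntervalIntegrable (fun s : ℝ => if a ≤ s then (1:ℝ) else 0) MeasureTheory.volume 0 b :=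
    (indicator_mono a).intervalIntegrable
  rw [intervalIntegral.integral_sub hint (intervalIntegrable_const),
    integral_indicator_Ici, intervalIntegral.integral_const]
  rcases le_total a b with hab | hab <;> rcases le_total a 0 with ha | ha <;>
    [rw [max_eq_left hab, max_eq_left ha]; rw [max_eq_left hab, max_eq_right ha];
     rw [max_eq_right hab, max_eq_left ha]; rw [max_eq_right hab, max_eq_right ha]] <;>
    simp only [rho, smul_eq_mul] <;> split_ifs <;> linarith
end

section
/- If e has continuous density f bounded below by c > 0 in a neighborhood [−η, η] of 0 with F(0) = τ, then for any b ∈ ℝ, E[ρ_τ(e − b)] − E[ρ_τ(e)] ≥ (c/2)·min(|b|, η)², where F is the CDF of e. -/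
open MeasureTheory

lemma rho_eq (τ u : ℝ) : rho τ u = τ * u + max (-u) 0 := by
  unfold rho; split_ifs with h
  · rw [max_eq_left (by linarith)]; ring
  · rw [max_eq_right (by linarith)]; ring

lemma ind_int (u x y : ℝ) :
    ∫ s in Set.Ioc x y, (if u ≤ s then (1:ℝ) else 0)
      = (volume (Set.Ioc x y ∩ Set.Ici u)).toReal := by
  have h1 : (fun s => if u ≤ s then (1:ℝ) else 0) = (Set.Ici u).indicator (fun _ => 1) := by
    ext s; simp [Set.indicator, Set.mem_Ici]
  rw [h1, MeasureTheory.setIntegral_indicator measurableSet_Ici,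
    MeasureTheory.setIntegral_const]
  simp
  rfl

lemma vol_pos (u b : ℝ) (hb : 0 ≤ b) :
    (volume (Set.Ioc 0 b ∩ Set.Ici u)).toReal = max (b-u) 0 - max (-u) 0 := by
  rcases le_or_gt u 0 with hu | hu
  · have : Set.Ioc 0 b ∩ Set.Ici u = Set.Ioc 0 b :=
      Set.inter_eq_left.mpr (fun s hs => le_trans hu hs.1.le)
    rw [this, Real.volume_Ioc, ENNReal.toReal_ofReal (by linarith)]
    rw [max_eq_left (by linarith), max_eq_left (by linarith)]; ring
  · rcases le_or_gt u b with hub | hub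
    · have : Set.Ioc 0 b ∩ Set.Ici u = Set.Icc u b := by
        ext s; simp only [Set.mem_inter_iff, Set.mem_Ioc, Set.mem_Ici, Set.mem_Icc]
        constructor
        · rintro ⟨⟨_, h2⟩, h3⟩; exact ⟨h3, h2⟩
        · rintro ⟨h1, h2⟩; exact ⟨⟨lt_of_lt_of_le hu h1, h2⟩, h1⟩
      rw [this, Real.volume_Icc, ENNReal.toReal_ofReal (by linarith)]
      rw [max_eq_left (by linarith), max_eq_right (by linarith)]; ring
    · have : Set.Ioc 0 b ∩ Set.Ici u = ∅ := by
        ext s; simp only [Set.mem_inter_iff, Set.mem_Ioc, Set.mem_Ici, Set.mem_empty_iff_false,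
          iff_false]
        rintro ⟨⟨_, h2⟩, h3⟩; linarith
      rw [this]
      rw [max_eq_right (by linarith), max_eq_right (by linarith)]; simp

lemma vol_neg (u b : ℝ) (hb : b ≤ 0) :
    -(volume (Set.Ioc b 0 ∩ Set.Ici u)).toReal = max (b-u) 0 - max (-u) 0 := by
  rcases le_or_gt u b with hu | hu
  · have : Set.Ioc b 0 ∩ Set.Ici u = Set.Ioc b 0 :=
      Set.inter_eq_left.mpr (fun s hs => le_trans hu hs.1.le)
    rw [this, Real.volume_Ioc, ENNReal.toReal_ofReal (by linarith)]
    rw [max_eq_left (by linarith), max_eq_left (by linarith)]; ring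
  · rcases le_or_gt u 0 with hu0 | hu0
    · have : Set.Ioc b 0 ∩ Set.Ici u = Set.Icc u 0 := by
        ext s; simp only [Set.mem_inter_iff, Set.mem_Ioc, Set.mem_Ici, Set.mem_Icc]
        constructor
        · rintro ⟨⟨_, h2⟩, h3⟩; exact ⟨h3, h2⟩
        · rintro ⟨h1, h2⟩; exact ⟨⟨lt_of_lt_of_le hu h1, h2⟩, h1⟩
      rw [this, Real.volume_Icc, ENNReal.toReal_ofReal (by linarith)]
      rw [max_eq_right (by linarith), max_eq_left (by linarith)]; ring
    · have : Set.Ioc b 0 ∩ Set.Ici u = ∅ := by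
        ext s; simp only [Set.mem_inter_iff, Set.mem_Ioc, Set.mem_Ici, Set.mem_empty_iff_false,
          iff_false]
        rintro ⟨⟨_, h2⟩, h3⟩; linarith
      rw [this]
      rw [max_eq_right (by linarith), max_eq_right (by linarith)]; simp

lemma fub {Ω : Type*} [MeasurableSpace Ω] (μ : Measure Ω) [IsProbabilityMeasure μ]
    (e : Ω → ℝ) (he : Measurable e) (x y : ℝ) :
    ∫ ω, (∫ s in Set.Ioc x y, (if e ω ≤ s then (1:ℝ) else 0)) ∂μ
      = ∫ s in Set.Ioc x y, (μ {ω | e ω ≤ s}).toReal := by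
  haveI : IsFiniteMeasure (volume.restrict (Set.Ioc x y)) := by
    constructor
    rw [Measure.restrict_apply_univ, Real.volume_Ioc]
    exact ENNReal.ofReal_lt_top
  have hmeas : Measurable (fun p : Ω × ℝ => if e p.1 ≤ p.2 then (1:ℝ) else 0) :=
    Measurable.ite (measurableSet_le (he.comp measurable_fst) measurable_snd)
      measurable_const measurable_const
  have hint : Integrable (Function.uncurry (fun ω s => if e ω ≤ s then (1:ℝ) else 0))
      (μ.prod (volume.restrict (Set.Ioc x y))) := by
    refine (integrable_const (1:ℝ)).mono' hmeas.aestronglyMeasurable ?_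
    filter_upwards with p
    simp only [Function.uncurry]
    split_ifs <;> simp
  rw [MeasureTheory.integral_integral_swap hint]
  refine setIntegral_congr_fun measurableSet_Ioc (fun s _ => ?_)
  have : (fun ω => if e ω ≤ s then (1:ℝ) else 0)
      = ({ω | e ω ≤ s}).indicator (fun _ => (1:ℝ)) := by
    ext ω; simp [Set.indicator, Set.mem_setOf_eq]
  rw [this]
  have hms : MeasurableSet {ω | e ω ≤ s} := he measurableSet_Iic
  rw [show integral μ ({ω | e ω ≤ s}.indicator fun _ => (1:ℝ))
      = ∫ ω, ({ω | e ω ≤ s}).indicator (fun _ => (1:ℝ)) ω ∂μ from rfl,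
    integral_indicator_const (1:ℝ) hms]
  simp
  rfl

theorem check_loss_quadratic_lower_bound
    {Ω : Type*} [MeasurableSpace Ω] (μ : Measure Ω) [IsProbabilityMeasure μ]
    (e : Ω → ℝ) (he : Measurable e) (heint : Integrable e μ)
    (τ : ℝ) (hτ : τ ∈ Set.Ioo (0:ℝ) 1)
    (F : ℝ → ℝ) (hFdef : ∀ t, F t = (μ {ω | e ω ≤ t}).toReal)
    (f : ℝ → ℝ) (hdensity : ∀ t, F t = ∫ s in Set.Iic t, f s)
    (hF0 : F 0 = τ)
    (c η : ℝ) (hc : 0 < c) (hη : 0 < η)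
    (hlower : ∀ s ∈ Set.Icc (-η) η, c ≤ f s)
    (b : ℝ) :
    c / 2 * (min |b| η)^2
      ≤ (∫ ω, rho τ (e ω - b) ∂μ) - ∫ ω, rho τ (e ω) ∂μ := by
  obtain ⟨hτ0, hτ1⟩ := hτ
  -- basic facts about F
  have hFmono : Monotone F := by
    intro s t hst
    rw [hFdef, hFdef]
    exact ENNReal.toReal_mono (measure_ne_top _ _)
      (measure_mono fun ω hω => le_trans hω hst)
  have hF0le : ∀ t, 0 ≤ F t := fun t => by rw [hFdef]; exact ENNReal.toReal_nonneg
  have hFle1 : ∀ t, F t ≤ 1 := by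
    intro t; rw [hFdef]
    have := prob_le_one (μ := μ) (s := {ω | e ω ≤ t})
    have := ENNReal.toReal_mono ENNReal.one_ne_top this
    simpa using this
  -- integrability of f near 0
  have hfi0 : IntegrableOn f (Set.Iic (0:ℝ)) := by
    by_contra h
    have := hdensity 0
    rw [integral_undef h] at this
    rw [this] at hF0; linarith
  have hfis : ∀ s : ℝ, 0 ≤ s → IntegrableOn f (Set.Iic s) := by
    intro s hs
    by_contra h
    have h1 := hdensity s
    rw [integral_undef h] at h1
    have := hFmono hs
    rw [hF0, h1] at this; linarith
  -- lower bounds on F near 0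
  have hIocfin : ∀ x y : ℝ, volume (Set.Ioc x y) < ⊤ := fun x y => by
    rw [Real.volume_Ioc]; exact ENNReal.ofReal_lt_top
  have hpos : ∀ s : ℝ, 0 ≤ s → s ≤ η → c * s ≤ F s - τ := by
    intro s hs hsη
    have hsplit : Set.Iic s = Set.Iic 0 ∪ Set.Ioc 0 s := (Set.Iic_union_Ioc_eq_Iic hs).symm
    have hfIoc : IntegrableOn f (Set.Ioc 0 s) :=
      (hfis s hs).mono_set Set.Ioc_subset_Iic_self
    have hFs : F s = F 0 + ∫ u in Set.Ioc 0 s, f u := by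
      rw [hdensity s, hdensity 0, hsplit,
        setIntegral_union (Set.Iic_disjoint_Ioc le_rfl) measurableSet_Ioc hfi0 hfIoc]
    have hconst : IntegrableOn (fun _ : ℝ => c) (Set.Ioc 0 s) :=
      integrableOn_const (hIocfin 0 s).ne
    have hmono : ∫ u in Set.Ioc 0 s, c ≤ ∫ u in Set.Ioc 0 s, f u := by
      refine setIntegral_mono_on hconst hfIoc measurableSet_Ioc (fun u hu => ?_)
      exact hlower u ⟨by linarith [hu.1], le_trans hu.2 hsη⟩
    have hcval : ∫ u in Set.Ioc 0 s, (c : ℝ) = c * s := by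
      rw [setIntegral_const, Real.volume_real_Ioc_of_le (by linarith)]
      simp [smul_eq_mul]; ring
    rw [hFs, hF0]; linarith [hmono, hcval.symm.le]
  have hneg : ∀ s : ℝ, -η ≤ s → s ≤ 0 → c * (-s) ≤ τ - F s := by
    intro s hsη hs
    have hsplit : Set.Iic (0:ℝ) = Set.Iic s ∪ Set.Ioc s 0 := (Set.Iic_union_Ioc_eq_Iic hs).symm
    have hfIic : IntegrableOn f (Set.Iic s) := hfi0.mono_set (Set.Iic_subset_Iic.2 hs)
    have hfIoc : IntegrableOn f (Set.Ioc s 0) :=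
      hfi0.mono_set Set.Ioc_subset_Iic_self
    have hFs : F 0 = F s + ∫ u in Set.Ioc s 0, f u := by
      rw [hdensity 0, hdensity s, hsplit,
        setIntegral_union (Set.Iic_disjoint_Ioc le_rfl) measurableSet_Ioc hfIic hfIoc]
    have hconst : IntegrableOn (fun _ : ℝ => c) (Set.Ioc s 0) :=
      integrableOn_const (hIocfin s 0).ne
    have hmono : ∫ u in Set.Ioc s 0, c ≤ ∫ u in Set.Ioc s 0, f u := by
      refine setIntegral_mono_on hconst hfIoc measurableSet_Ioc (fun u hu => ?_)
      exact hlower u ⟨by linarith [hu.1], by linarith [hu.2]⟩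
    have hcval : ∫ u in Set.Ioc s 0, (c : ℝ) = c * (-s) := by
      rw [setIntegral_const, Real.volume_real_Ioc_of_le (by linarith)]
      simp [smul_eq_mul]; ring
    rw [hF0] at hFs
    linarith [hmono, hcval.symm.le]
  -- integrability of F on bounded intervals
  have hFint : ∀ x y : ℝ, IntegrableOn F (Set.Ioc x y) := by
    intro x y
    haveI : IsFiniteMeasure (volume.restrict (Set.Ioc x y)) := by
      constructor; rw [Measure.restrict_apply_univ]; exact hIocfin x y
    refine (integrable_const (1:ℝ)).mono'
      (hFmono.measurable.aestronglyMeasurable) ?_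
    filter_upwards with s
    rw [Real.norm_eq_abs, abs_le]
    exact ⟨by linarith [hF0le s], hFle1 s⟩
  -- integrability of rho compositions
  have hrhoint : ∀ a : ℝ, Integrable (fun ω => rho τ (e ω - a)) μ := by
    intro a
    have hm : Measurable (fun ω => rho τ (e ω - a)) := by
      unfold rho
      exact (he.sub_const a).mul
        (measurable_const.sub
          (Measurable.ite (measurableSet_lt (he.sub_const a) measurable_const)
            measurable_const measurable_const))
    refine ((heint.sub (integrable_const a)).abs).mono' hm.aestronglyMeasurable ?_
    filter_upwards with ω
    rw [Real.norm_eq_abs]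
    unfold rho
    rw [abs_mul]
    have h2 : |τ - if e ω - a < 0 then (1:ℝ) else 0| ≤ 1 := by
      split_ifs <;> rw [abs_le] <;> constructor <;> linarith
    calc |e ω - a| * |τ - if e ω - a < 0 then (1:ℝ) else 0| ≤ |e ω - a| * 1 :=
          mul_le_mul_of_nonneg_left h2 (abs_nonneg _)
      _ = |(fun ω => e ω - a) ω| := by simp
  have h1 : Integrable (fun ω => rho τ (e ω - b)) μ := hrhoint b
  have h2 : Integrable (fun ω => rho τ (e ω)) μ := by
    have := hrhoint 0; simpa using this
  rcases le_or_gt 0 b with hb | hb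
  · -- case b ≥ 0
    have hpt : ∀ ω, rho τ (e ω - b) - rho τ (e ω)
        = -(τ*b) + ∫ s in Set.Ioc 0 b, (if e ω ≤ s then (1:ℝ) else 0) := by
      intro ω
      rw [rho_eq, rho_eq, ind_int, vol_pos (e ω) b hb,
        show -(e ω - b) = b - e ω from by ring]
      ring
    have hinner_int : Integrable
        (fun ω => ∫ s in Set.Ioc 0 b, (if e ω ≤ s then (1:ℝ) else 0)) μ := by
      have heq : (fun ω => ∫ s in Set.Ioc 0 b, (if e ω ≤ s then (1:ℝ) else 0))
          = fun ω => (rho τ (e ω - b) - rho τ (e ω)) + τ*b := by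
        funext ω; rw [hpt ω]; ring
      rw [heq]; exact (h1.sub h2).add (integrable_const _)
    have hE : (∫ ω, rho τ (e ω - b) ∂μ) - ∫ ω, rho τ (e ω) ∂μ
        = -(τ*b) + ∫ s in Set.Ioc 0 b, F s := by
      rw [← integral_sub h1 h2]
      calc ∫ ω, (rho τ (e ω - b) - rho τ (e ω)) ∂μ
          = ∫ ω, (-(τ*b) + ∫ s in Set.Ioc 0 b, (if e ω ≤ s then (1:ℝ) else 0)) ∂μ :=
            integral_congr_ae (Filter.Eventually.of_forall hpt)
        _ = -(τ*b) + ∫ ω, (∫ s in Set.Ioc 0 b, (if e ω ≤ s then (1:ℝ) else 0)) ∂μ := by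
            rw [integral_add (integrable_const _) hinner_int, integral_const]; simp
        _ = -(τ*b) + ∫ s in Set.Ioc 0 b, F s := by
            rw [fub μ e he 0 b]
            congr 1
            exact setIntegral_congr_fun measurableSet_Ioc (fun s _ => (hFdef s).symm)
    have hτconst : IntegrableOn (fun _ : ℝ => τ) (Set.Ioc 0 b) :=
      integrableOn_const (hIocfin 0 b).ne
    have hτb : ∫ s in Set.Ioc 0 b, (τ:ℝ) = τ * b := by
      rw [setIntegral_const, Real.volume_real_Ioc_of_le (by linarith)]
      simp [smul_eq_mul]; ring
    have hE2 : (∫ ω, rho τ (e ω - b) ∂μ) - ∫ ω, rho τ (e ω) ∂μ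
        = ∫ s in Set.Ioc 0 b, (F s - τ) := by
      rw [hE, integral_sub (hFint 0 b) hτconst, hτb]; ring
    set m := min b η with hm
    have hm0 : 0 ≤ m := le_min hb hη.le
    have hmb : m ≤ b := min_le_left _ _
    have hmη : m ≤ η := min_le_right _ _
    have hnonneg : 0 ≤ᵐ[volume.restrict (Set.Ioc 0 b)] fun s => F s - τ := by
      refine (ae_restrict_iff' measurableSet_Ioc).2 (Filter.Eventually.of_forall ?_)
      intro s hs
      have := hFmono hs.1.le
      rw [hF0] at this
      simp only [Pi.zero_apply]; linarith
    have hstep1 : ∫ s in Set.Ioc 0 m, (F s - τ) ≤ ∫ s in Set.Ioc 0 b, (F s - τ) := by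
      refine setIntegral_mono_set ((hFint 0 b).sub hτconst) hnonneg ?_
      exact HasSubset.Subset.eventuallyLE (Set.Ioc_subset_Ioc_right hmb)
    have hcs_int : IntegrableOn (fun s : ℝ => c * s) (Set.Ioc 0 m) :=
      (continuous_const.mul continuous_id).integrableOn_Ioc
    have hstep2 : ∫ s in Set.Ioc 0 m, c * s ≤ ∫ s in Set.Ioc 0 m, (F s - τ) := by
      refine setIntegral_mono_on hcs_int
        (MeasureTheory.IntegrableOn.mono_set ((hFint 0 b).sub hτconst) (Set.Ioc_subset_Ioc_right hmb))
        measurableSet_Ioc (fun s hs => ?_)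
      exact hpos s hs.1.le (le_trans hs.2 hmη)
    have hval : ∫ s in Set.Ioc 0 m, c * s = c / 2 * m ^ 2 := by
      rw [← intervalIntegral.integral_of_le hm0, intervalIntegral.integral_const_mul,
        integral_id]
      ring
    rw [abs_of_nonneg hb, hE2, ← hm]
    linarith [hstep1, hstep2, hval.symm.le]
  · -- case b < 0
    have hb' : b ≤ 0 := hb.le
    have hpt : ∀ ω, rho τ (e ω - b) - rho τ (e ω)
        = -(τ*b) - ∫ s in Set.Ioc b 0, (if e ω ≤ s then (1:ℝ) else 0) := by
      intro ω
      rw [rho_eq, rho_eq, ind_int]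
      have := vol_neg (e ω) b hb'
      rw [show -(e ω - b) = b - e ω from by ring]
      linarith [this]
    have hinner_int : Integrable
        (fun ω => ∫ s in Set.Ioc b 0, (if e ω ≤ s then (1:ℝ) else 0)) μ := by
      have heq : (fun ω => ∫ s in Set.Ioc b 0, (if e ω ≤ s then (1:ℝ) else 0))
          = fun ω => -(τ*b) - (rho τ (e ω - b) - rho τ (e ω)) := by
        funext ω; rw [hpt ω]; ring
      rw [heq]; exact (integrable_const _).sub (h1.sub h2)
    have hE : (∫ ω, rho τ (e ω - b) ∂μ) - ∫ ω, rho τ (e ω) ∂μ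
        = -(τ*b) - ∫ s in Set.Ioc b 0, F s := by
      rw [← integral_sub h1 h2]
      calc ∫ ω, (rho τ (e ω - b) - rho τ (e ω)) ∂μ
          = ∫ ω, (-(τ*b) - ∫ s in Set.Ioc b 0, (if e ω ≤ s then (1:ℝ) else 0)) ∂μ :=
            integral_congr_ae (Filter.Eventually.of_forall hpt)
        _ = -(τ*b) - ∫ ω, (∫ s in Set.Ioc b 0, (if e ω ≤ s then (1:ℝ) else 0)) ∂μ := by
            rw [integral_sub (integrable_const _) hinner_int, integral_const]; simp
        _ = -(τ*b) - ∫ s in Set.Ioc b 0, F s := by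
            rw [fub μ e he b 0]
            congr 1
            exact setIntegral_congr_fun measurableSet_Ioc (fun s _ => (hFdef s).symm)
    have hτconst : IntegrableOn (fun _ : ℝ => τ) (Set.Ioc b 0) :=
      integrableOn_const (hIocfin b 0).ne
    have hτb : ∫ s in Set.Ioc b 0, (τ:ℝ) = -(τ * b) := by
      rw [setIntegral_const, Real.volume_real_Ioc_of_le (by linarith)]
      simp [smul_eq_mul]; ring
    have hE2 : (∫ ω, rho τ (e ω - b) ∂μ) - ∫ ω, rho τ (e ω) ∂μ
        = ∫ s in Set.Ioc b 0, (τ - F s) := by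
      rw [hE, integral_sub hτconst (hFint b 0), hτb]
      try ring
    set m := min (-b) η with hm
    have hm0 : 0 ≤ m := le_min (by linarith) hη.le
    have hmb : -m ≥ b := by
      have := min_le_left (-b) η; rw [← hm] at this; linarith
    have hmη : m ≤ η := min_le_right _ _
    have hnonneg : 0 ≤ᵐ[volume.restrict (Set.Ioc b 0)] fun s => τ - F s := by
      refine (ae_restrict_iff' measurableSet_Ioc).2 (Filter.Eventually.of_forall ?_)
      intro s hs
      have := hFmono hs.2
      rw [hF0] at this
      simp only [Pi.zero_apply]; linarith
    have hstep1 : ∫ s in Set.Ioc (-m) 0, (τ - F s) ≤ ∫ s in Set.Ioc b 0, (τ - F s) := by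
      refine setIntegral_mono_set (hτconst.sub (hFint b 0)) hnonneg ?_
      exact HasSubset.Subset.eventuallyLE (Set.Ioc_subset_Ioc_left hmb)
    have hcs_int : IntegrableOn (fun s : ℝ => c * (-s)) (Set.Ioc (-m) 0) :=
      (continuous_const.mul continuous_id.neg).integrableOn_Ioc
    have hstep2 : ∫ s in Set.Ioc (-m) 0, c * (-s) ≤ ∫ s in Set.Ioc (-m) 0, (τ - F s) := by
      refine setIntegral_mono_on hcs_int
        (MeasureTheory.IntegrableOn.mono_set (hτconst.sub (hFint b 0)) (Set.Ioc_subset_Ioc_left hmb))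
        measurableSet_Ioc (fun s hs => ?_)
      exact hneg s (by linarith [hs.1]) hs.2
    have hval : ∫ s in Set.Ioc (-m) 0, c * (-s) = c / 2 * m ^ 2 := by
      rw [← intervalIntegral.integral_of_le (by linarith : -m ≤ 0),
        intervalIntegral.integral_const_mul]
      have : ∫ s in (-m)..(0:ℝ), -s = -((0:ℝ)^2 - (-m)^2)/2 := by
        rw [intervalIntegral.integral_neg, integral_id]; ring
      rw [this]; ring
    rw [abs_of_neg hb, hE2, ← hm]
    linarith [hstep1, hstep2, hval.symm.le]
end
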